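/- For every integer k ≥ 0, v(4k+3) = (2k+2)/(4k+3); that is, in the misère search game on the path with n = 4k+3 vertices, the first player wins with probability (2k+2)/(4k+3) under optimal play by both players. -/
import Mathlib


/-- Optimal first-player winning probability in the misère search game `MS(P_n)`:
`v 0 = 0` and for `n ≥ 1`,
`v n = max_{1 ≤ m ≤ n} (1/n) * ((m-1) * (1 - v (m-1)) + (n-m) * (1 - v (n-m)))`. -/
noncomputable def v : ℕ → ℝ
  | 0 => 0
  | n + 1 =>
    (Finset.Icc 1 (n + 1)).attach.sup'
      (Finset.attach_nonempty_iff.mpr ⟨1, by simp⟩)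
      (fun m => (1 / ((n : ℝ) + 1)) *
        (((m.1 - 1 : ℕ) : ℝ) * (1 - v (m.1 - 1)) +
         ((n + 1 - m.1 : ℕ) : ℝ) * (1 - v (n + 1 - m.1))))
  decreasing_by
  · have hm := m.2; simp only [Finset.mem_Icc] at hm; omega
  · have hm := m.2; simp only [Finset.mem_Icc] at hm; omega

/-- Numerator of `v n` : `n * v n = F n`. -/
def F (n : ℕ) : ℕ := n / 2 + if n % 4 = 3 then 1 else 0

/-- `H j = j * (1 - v j)`. -/
def H (n : ℕ) : ℕ := n - F n

lemma F_le (n : ℕ) : F n ≤ n := by unfold F; split_ifs <;> omega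

lemma key_le (a b n : ℕ) (h : a + b = n) : H a + H b ≤ F (n + 1) := by
  unfold H F; split_ifs <;> omega

lemma key_wit (n : ℕ) :
    ∃ m, 1 ≤ m ∧ m ≤ n + 1 ∧ H (m - 1) + H (n + 1 - m) = F (n + 1) := by
  rcases n with _ | n
  · exact ⟨1, le_refl _, le_refl _, by unfold H F; split_ifs <;> omega⟩
  · refine ⟨2, by omega, by omega, ?_⟩
    unfold H F; split_ifs <;> omega

lemma v_eq (n : ℕ) : v n = (F n : ℝ) / n := by
  induction n using Nat.strong_induction_on with
  | _ n IH =>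
    match n with
    | 0 => simp [v, F]
    | Nat.succ n =>
      have hterm : ∀ j, j ≤ n → (j : ℝ) * (1 - v j) = (H j : ℝ) := by
        intro j hj
        rw [IH j (by omega)]
        rcases Nat.eq_zero_or_pos j with h0 | h0
        · subst h0; simp [H, F]
        · have hF : F j ≤ j := F_le j
          have hj0 : (j : ℝ) ≠ 0 := by positivity
          rw [H, Nat.cast_sub hF]
          field_simp
      rw [v]
      apply le_antisymm
      · apply Finset.sup'_le
        intro m _
        have hm := m.2
        rw [Finset.mem_Icc] at hm
        rw [hterm (m.1 - 1) (by omega), hterm (n + 1 - m.1) (by omega)]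
        have hle : H (m.1 - 1) + H (n + 1 - m.1) ≤ F (n + 1) :=
          key_le _ _ n (by omega)
        have hle' : ((H (m.1 - 1) : ℝ) + (H (n + 1 - m.1) : ℝ)) ≤ (F (n + 1) : ℝ) := by
          exact_mod_cast hle
        have hn0 : (0 : ℝ) < (n : ℝ) + 1 := by positivity
        have step : (1 / ((n : ℝ) + 1)) * ((H (m.1 - 1) : ℝ) + (H (n + 1 - m.1) : ℝ))
            ≤ (1 / ((n : ℝ) + 1)) * (F (n + 1) : ℝ) :=
          mul_le_mul_of_nonneg_left hle' (by positivity)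
        refine le_trans step (le_of_eq ?_)
        push_cast
        ring
      · obtain ⟨m, hm1, hm2, hm⟩ := key_wit n
        have hmem : m ∈ Finset.Icc 1 (n + 1) := Finset.mem_Icc.mpr ⟨hm1, hm2⟩
        have := Finset.le_sup' (f := fun m : {x // x ∈ Finset.Icc 1 (n + 1)} =>
          (1 / ((n : ℝ) + 1)) *
            (((m.1 - 1 : ℕ) : ℝ) * (1 - v (m.1 - 1)) +
             ((n + 1 - m.1 : ℕ) : ℝ) * (1 - v (n + 1 - m.1))))
          (b := (⟨m, hmem⟩ : {x // x ∈ Finset.Icc 1 (n + 1)})) (Finset.mem_attach _ _)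
        refine le_trans ?_ this
        rw [hterm (m - 1) (by omega), hterm (n + 1 - m) (by omega)]
        have hc : ((H (m - 1) : ℝ) + (H (n + 1 - m) : ℝ)) = (F (n + 1) : ℝ) := by
          exact_mod_cast hm
        rw [hc]
        apply le_of_eq
        push_cast
        ring

/-- In the misère search game on a path with `n = 4k+3` vertices, the first player
wins with probability `(2k+2)/(4k+3)` under optimal play. -/
theorem misere_path_4k3 (k : ℕ) :
    v (4 * k + 3) = (2 * (k : ℝ) + 2) / (4 * (k : ℝ) + 3) := by
  have hF : F (4 * k + 3) = 2 * k + 2 := by unfold F; split_ifs <;> omega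
  rw [v_eq, hF]
  push_cast
  ring_nf
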